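/- Fix k ∈ ℕ, k ≥ 1, and define x_n = 0.(kn)(k(n+1))(k(n+2))... ∈ [0,1) by concatenating the decimal expansions of kn, k(n+1), k(n+2), .... Then (x_n) is not uniformly distributed mod 1 over [0.1, 1). -/

import Mathlib

open scoped Classical
open Filter

/-- Number of decimal digits of `m`. -/
def numDigits (m : ℕ) : ℕ := (Nat.digits 10 m).length

/-- The natural number obtained by concatenating the decimal expansions of
`a 0, a 1, …, a K`. -/
def concatBlock (a : ℕ → ℕ) : ℕ → ℕ
  | 0 => a 0
  | K + 1 => concatBlock a K * 10 ^ numDigits (a (K + 1)) + a (K + 1)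

/-- The total number of decimal digits of `a 0, a 1, …, a K`. -/
def totalDigits (a : ℕ → ℕ) : ℕ → ℕ
  | 0 => numDigits (a 0)
  | K + 1 => totalDigits a K + numDigits (a (K + 1))

/-- The real number `0.(a 0)(a 1)(a 2)…` obtained by concatenating the decimal
expansions of `a 0, a 1, a 2, …` after the decimal point. -/
noncomputable def concatReal (a : ℕ → ℕ) : ℝ :=
  ⨆ K : ℕ, (concatBlock a K : ℝ) / 10 ^ totalDigits a K

/-- `x` is uniformly distributed mod 1 over `[α, β)`. -/
def UDOver (x : ℕ → ℝ) (α β : ℝ) : Prop :=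
  ∀ a b : ℝ, α ≤ a → a < b → b ≤ β →
    Filter.Tendsto
      (fun N : ℕ => (((Finset.Icc 1 N).filter (fun n => x n ∈ Set.Ico a b)).card : ℝ) / N)
      Filter.atTop (nhds ((b - a) / (β - α)))

lemma lt_pow_numDigits (m : ℕ) : m < 10 ^ numDigits m :=
  Nat.lt_base_pow_length_digits (by norm_num)

lemma numDigits_le_totalDigits (a : ℕ → ℕ) (K : ℕ) :
    numDigits (a 0) ≤ totalDigits a K := by
  induction K with
  | zero => exact le_refl _
  | succ K ih => exact le_trans ih (Nat.le_add_right _ _)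

lemma concatBlock_lt (a : ℕ → ℕ) (K : ℕ) :
    concatBlock a K < (a 0 + 1) * 10 ^ (totalDigits a K - numDigits (a 0)) := by
  induction K with
  | zero => simp [concatBlock, totalDigits]
  | succ K ih =>
    have hle := numDigits_le_totalDigits a K
    have hexp : totalDigits a (K+1) - numDigits (a 0)
        = (totalDigits a K - numDigits (a 0)) + numDigits (a (K+1)) := by
      show totalDigits a K + numDigits (a (K+1)) - numDigits (a 0) = _
      omega
    have h1 : concatBlock a K + 1 ≤ (a 0 + 1) * 10 ^ (totalDigits a K - numDigits (a 0)) := ih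
    calc concatBlock a (K+1)
        = concatBlock a K * 10 ^ numDigits (a (K+1)) + a (K+1) := rfl
      _ < concatBlock a K * 10 ^ numDigits (a (K+1)) + 10 ^ numDigits (a (K+1)) :=
          Nat.add_lt_add_left (lt_pow_numDigits _) _
      _ = (concatBlock a K + 1) * 10 ^ numDigits (a (K+1)) := by ring
      _ ≤ (a 0 + 1) * 10 ^ (totalDigits a K - numDigits (a 0)) * 10 ^ numDigits (a (K+1)) :=
          Nat.mul_le_mul_right _ h1
      _ = (a 0 + 1) * 10 ^ (totalDigits a (K+1) - numDigits (a 0)) := by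
          rw [hexp, pow_add, mul_assoc]
      _ ≤ _ := le_refl _

lemma partial_le (a : ℕ → ℕ) (K : ℕ) :
    (concatBlock a K : ℝ) / 10 ^ totalDigits a K ≤ (a 0 + 1 : ℝ) / 10 ^ numDigits (a 0) := by
  have hb : concatBlock a K < (a 0 + 1) * 10 ^ (totalDigits a K - numDigits (a 0)) :=
    concatBlock_lt a K
  have hle := numDigits_le_totalDigits a K
  rw [div_le_div_iff₀ (by positivity) (by positivity)]
  have : (concatBlock a K : ℝ) * 10 ^ numDigits (a 0)
      ≤ ((a 0 + 1) * 10 ^ (totalDigits a K - numDigits (a 0)) : ℕ) * 10 ^ numDigits (a 0) := by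
    exact_mod_cast Nat.mul_le_mul_right _ hb.le
  refine this.trans_eq ?_
  push_cast
  rw [mul_assoc, ← pow_add]
  congr 2
  omega

lemma concatReal_le (a : ℕ → ℕ) :
    concatReal a ≤ (a 0 + 1 : ℝ) / 10 ^ numDigits (a 0) :=
  ciSup_le (partial_le a)

lemma le_concatReal (a : ℕ → ℕ) :
    (a 0 : ℝ) / 10 ^ numDigits (a 0) ≤ concatReal a := by
  have hb : BddAbove (Set.range fun K => (concatBlock a K : ℝ) / 10 ^ totalDigits a K) :=
    ⟨_, Set.forall_mem_range.mpr (partial_le a)⟩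
  have := le_ciSup hb 0
  simpa [concatBlock, totalDigits, concatReal] using this

lemma concatReal_mem_Ico (a : ℕ → ℕ) (M : ℕ) (h1 : 10 ^ M ≤ a 0) (h2 : a 0 ≤ 2 * 10 ^ M - 2) :
    concatReal a ∈ Set.Ico (0.1 : ℝ) 0.2 := by
  have hP : (1:ℕ) ≤ 10 ^ M := Nat.one_le_pow _ _ (by norm_num)
  have hm0 : a 0 ≠ 0 := by omega
  have hlt : a 0 < 10 ^ (M + 1) := by
    have : (10:ℕ) ^ (M+1) = 10 * 10 ^ M := pow_succ' 10 M
    omega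
  have hd : numDigits (a 0) = M + 1 := by
    unfold numDigits
    rw [Nat.digits_len 10 (a 0) (by norm_num) hm0,
      Nat.log_eq_of_pow_le_of_lt_pow h1 hlt]
  have hP' : (0:ℝ) < 10 ^ M := by positivity
  have hcast1 : (10:ℝ) ^ M ≤ (a 0 : ℝ) := by exact_mod_cast h1
  have hcast2 : (a 0 : ℝ) ≤ 2 * 10 ^ M - 2 := by
    have : ((a 0 : ℕ) : ℝ) ≤ ((2 * 10 ^ M - 2 : ℕ) : ℝ) := by exact_mod_cast h2
    rw [Nat.cast_sub (by omega)] at this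
    push_cast at this
    linarith
  have hlow := le_concatReal a
  have hup := concatReal_le a
  rw [hd] at hlow hup
  constructor
  · have : (0.1:ℝ) ≤ (a 0 : ℝ) / 10 ^ (M + 1) := by
      rw [le_div_iff₀ (by positivity), pow_succ]
      nlinarith
    linarith
  · have : ((a 0 : ℝ) + 1) / 10 ^ (M + 1) < 0.2 := by
      rw [div_lt_iff₀ (by positivity), pow_succ]
      nlinarith
    linarith


/-- For `k ≥ 1`, the sequence `x n = 0.(kn)(k(n+1))(k(n+2))…` is not
uniformly distributed mod 1 over `[0.1, 1)`. -/
theorem stmt4 (k : ℕ) (hk : 1 ≤ k) :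
    ¬ UDOver (fun n => concatReal (fun i => k * (n + i))) 0.1 1 := by
  intro h
  have h1 := h 0.1 0.2 le_rfl (by norm_num) (by norm_num)
  have hev : ∀ᶠ N in atTop,
      (((Finset.Icc 1 N).filter
        (fun n => concatReal (fun i => k * (n + i)) ∈ Set.Ico (0.1:ℝ) 0.2)).card : ℝ) / N
        < 3/10 := by
    apply h1.eventually_lt_const
    norm_num
  obtain ⟨N₀, hN₀⟩ := eventually_atTop.mp hev
  have hk0 : 0 < k := hk
  set M := k * (N₀ + 3) with hM
  set P := 10 ^ M with hPdef
  have hPM : M < P := Nat.lt_pow_self (by norm_num)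
  have hMe : M = k * N₀ + 3 * k := by rw [hM]; ring
  have hP : 3 * k + 1 ≤ P := by omega
  set N := (2 * P - 2) / k with hNdef
  set L := (P + k - 1) / k with hLdef
  have he1 : k * N + (2 * P - 2) % k = 2 * P - 2 := Nat.div_add_mod _ _
  have hr1 : (2 * P - 2) % k < k := Nat.mod_lt _ hk0
  have he2 : k * L + (P + k - 1) % k = P + k - 1 := Nat.div_add_mod _ _
  have hr2 : (P + k - 1) % k < k := Nat.mod_lt _ hk0
  -- basic bounds
  have hkN1 : k * N ≤ 2 * P - 2 := by omega
  have hkN2 : 2 * P - k - 1 ≤ k * N := by omega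
  have hkL1 : P ≤ k * L := by omega
  have hkL2 : k * L ≤ P + k - 1 := by omega
  have hLN : L ≤ N := Nat.le_of_mul_le_mul_left (by omega) hk0
  have hL1 : 1 ≤ L := by
    rcases Nat.eq_zero_or_pos L with h0 | h0
    · rw [h0, Nat.mul_zero] at hkL1; omega
    · exact h0
  have hNN0 : N₀ ≤ N := by
    refine Nat.le_of_mul_le_mul_left ?_ hk0
    omega
  -- the subset
  have hsub : Finset.Icc L N ⊆ (Finset.Icc 1 N).filter
      (fun n => concatReal (fun i => k * (n + i)) ∈ Set.Ico (0.1:ℝ) 0.2) := by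
    intro n hn
    rw [Finset.mem_Icc] at hn
    rw [Finset.mem_filter, Finset.mem_Icc]
    refine ⟨⟨le_trans hL1 hn.1, hn.2⟩, ?_⟩
    have ha0 : k * (n + 0) = k * n := by ring
    refine concatReal_mem_Ico _ M ?_ ?_
    · rw [ha0]
      calc P ≤ k * L := hkL1
        _ ≤ k * n := Nat.mul_le_mul_left _ hn.1
    · rw [ha0]
      calc k * n ≤ k * N := Nat.mul_le_mul_left _ hn.2
        _ ≤ 2 * P - 2 := hkN1
  have hcard : N + 1 - L ≤ ((Finset.Icc 1 N).filter
      (fun n => concatReal (fun i => k * (n + i)) ∈ Set.Ico (0.1:ℝ) 0.2)).card := by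
    calc N + 1 - L = (Finset.Icc L N).card := (Nat.card_Icc L N).symm
      _ ≤ _ := Finset.card_le_card hsub
  have key : 3 * N ≤ 10 * (N + 1 - L) := by
    have hc : k * (N + 1 - L) = k * N + k - k * L := by
      rw [Nat.mul_sub, Nat.mul_add, Nat.mul_one]
    refine Nat.le_of_mul_le_mul_left ?_ hk0
    calc k * (3 * N) = 3 * (k * N) := by ring
      _ ≤ 10 * (k * N + k - k * L) := by omega
      _ = 10 * (k * (N + 1 - L)) := by rw [hc]
      _ = k * (10 * (N + 1 - L)) := by ring
  have hNpos : 0 < N := lt_of_lt_of_le hL1 hLN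
  have hfin := hN₀ N hNN0
  set c := ((Finset.Icc 1 N).filter
      (fun n => concatReal (fun i => k * (n + i)) ∈ Set.Ico (0.1:ℝ) 0.2)).card with hcdef
  have h3 : 3 * N ≤ 10 * c := le_trans key (by omega)
  have h3R : (3:ℝ) * N ≤ 10 * c := by exact_mod_cast h3
  have hNR : (0:ℝ) < N := by exact_mod_cast hNpos
  rw [div_lt_iff₀ hNR] at hfin
  linarith
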